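/- Suppose M : ℕ → (0,∞) satisfies lim_{N→∞} N(ln ln N)²/(M(N)·ln N) = 0. Then for all sufficiently large N, for every β in (β_c − 1/√(4M(N)·N·ln N), β_c + 1/√(4M(N)·N·ln N)) and every θ ∈ (0,π], one has |(1 − csch(2β))·csch(γ_θ(β))| ≤ √2, where β_c = ln(1+√2)/2 and γ_θ(β) is the unique γ ≥ 0 with cosh(γ) = coth(2β)cosh(2β) − cos θ. -/

import Mathlib

open Filter

/-- The hyperbolic cotangent. -/
noncomputable def coth (x : ℝ) : ℝ := Real.cosh x / Real.sinh x

/-- The hyperbolic cosecant. -/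
noncomputable def csch (x : ℝ) : ℝ := 1 / Real.sinh x

/-- The critical inverse temperature of the two-dimensional Ising model. -/
noncomputable def betac : ℝ := Real.log (1 + Real.sqrt 2) / 2

lemma key_ineq (b g θ : ℝ) (hb : 1/4 ≤ b) (hθ1 : 0 < θ) (hθ2 : θ ≤ Real.pi)
    (hg0 : 0 ≤ g) (hgc : Real.cosh g = coth b * Real.cosh b - Real.cos θ) :
    |(1 - csch b) * csch g| ≤ Real.sqrt 2 := by
  have hb0 : 0 < b := by linarith
  have hs : (1:ℝ)/4 < Real.sinh b :=
    lt_of_le_of_lt hb (Real.self_lt_sinh_iff.mpr hb0)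
  set s := Real.sinh b with hsdef
  have hs0 : 0 < s := by linarith
  have hcosh : s * Real.cosh g = s^2 + 1 - s * Real.cos θ := by
    rw [hgc, coth]
    have := Real.cosh_sq b
    field_simp
    nlinarith [Real.cosh_sq b]
  have hu : Real.cos θ < 1 := by
    have h := Real.cos_lt_cos_of_nonneg_of_le_pi (le_refl 0) hθ2 hθ1
    simpa using h
  have hu' : -1 ≤ Real.cos θ := Real.neg_one_le_cos θ
  have hcg1 : 1 < Real.cosh g := by nlinarith [sq_nonneg (s-1)]
  have htnn : 0 ≤ Real.sinh g := Real.sinh_nonneg_iff.mpr hg0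
  have ht2 : Real.sinh g ^ 2 = Real.cosh g ^ 2 - 1 := by
    nlinarith [Real.cosh_sq g]
  have ht0 : 0 < Real.sinh g := by nlinarith
  set t := Real.sinh g with htdef
  have hkey : 2*(s-1)^2 ≤ s * t^2 := by
    nlinarith [mul_pos hs0 (sub_pos.mpr hu), sq_nonneg (s-1), sq_nonneg (s*Real.cos θ - s)]
  have hsq : ((1 - csch b) * csch g)^2 ≤ 2 := by
    rw [csch, csch, ← hsdef, ← htdef]
    have e : ((1 - 1/s) * (1/t))^2 = (s-1)^2 / (s^2 * t^2) := by
      field_simp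
    rw [e, div_le_iff₀ (by positivity)]
    nlinarith [mul_le_mul_of_nonneg_left hkey hs0.le,
      mul_nonneg (by linarith : (0:ℝ) ≤ 4*s - 1) (sq_nonneg (s-1))]
  calc |(1 - csch b) * csch g| = Real.sqrt (((1 - csch b) * csch g)^2) :=
        (Real.sqrt_sq_eq_abs _).symm
    _ ≤ Real.sqrt 2 := Real.sqrt_le_sqrt hsq

/-- Suppose `M : ℕ → (0,∞)` satisfies `N(ln ln N)²/(M(N)·ln N) → 0`. Then for all large `N`,
for every `β ∈ (β_c − 1/√(4M(N)N ln N), β_c + 1/√(4M(N)N ln N))` and every `θ ∈ (0,π]`,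
`|(1 − csch(2β))·csch(γ_θ(β))| ≤ √2`, where `γ_θ(β)` is the unique `γ ≥ 0` with
`cosh γ = coth(2β)cosh(2β) − cos θ`. -/
theorem stmt6 (M : ℕ → ℝ) (hMpos : ∀ N, 0 < M N)
    (hM : Tendsto (fun N : ℕ =>
        (N : ℝ) * (Real.log (Real.log N)) ^ 2 / (M N * Real.log N)) atTop (nhds 0))
    (γ : ℝ → ℝ → ℝ)
    (hγ : ∀ β > (0 : ℝ), ∀ θ ∈ Set.Ioc 0 Real.pi,
      0 ≤ γ β θ ∧ Real.cosh (γ β θ) = coth (2 * β) * Real.cosh (2 * β) - Real.cos θ) :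
    ∀ᶠ N : ℕ in atTop,
      ∀ β ∈ Set.Ioo (betac - 1 / Real.sqrt (4 * M N * N * Real.log N))
          (betac + 1 / Real.sqrt (4 * M N * N * Real.log N)),
        ∀ θ ∈ Set.Ioc 0 Real.pi,
          |(1 - csch (2 * β)) * csch (γ β θ)| ≤ Real.sqrt 2 := by
  have h1 : ∀ᶠ N : ℕ in atTop,
      (N : ℝ) * (Real.log (Real.log N)) ^ 2 / (M N * Real.log N) < 1 :=
    hM.eventually (eventually_lt_nhds one_pos)
  filter_upwards [h1, eventually_ge_atTop 16] with N hN1 hN16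
  intro β hβ θ hθ
  have hN16' : (16:ℝ) ≤ (N:ℝ) := by exact_mod_cast hN16
  have hlog : Real.exp 1 ≤ Real.log N := by
    have h : Real.log 16 ≤ Real.log N := Real.log_le_log (by norm_num) hN16'
    have h16 : Real.log 16 = 4 * Real.log 2 := by
      rw [show (16:ℝ) = 2^4 by norm_num, Real.log_pow]; push_cast; ring
    nlinarith [Real.log_two_gt_d9, Real.exp_one_lt_d9]
  have hloglog : 1 ≤ Real.log (Real.log N) := by
    have h := Real.log_le_log (Real.exp_pos 1) hlog
    rwa [Real.log_exp] at h
  have hlogpos : 0 < Real.log N := lt_of_lt_of_le (Real.exp_pos 1) hlog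
  have hml : (N:ℝ) ≤ M N * Real.log N := by
    have hpos : 0 < M N * Real.log N := mul_pos (hMpos N) hlogpos
    have h := (div_lt_one hpos).mp hN1
    nlinarith [mul_nonneg (by linarith : (0:ℝ) ≤ (N:ℝ))
      (by nlinarith : (0:ℝ) ≤ (Real.log (Real.log N))^2 - 1)]
  have hbig : (1024:ℝ) ≤ 4 * M N * N * Real.log N := by
    have he : 4 * M N * (N:ℝ) * Real.log N = 4 * (N:ℝ) * (M N * Real.log N) := by ring
    rw [he]; nlinarith
  have h32 : (32:ℝ) ≤ Real.sqrt (4 * M N * N * Real.log N) := by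
    have h := Real.sqrt_le_sqrt hbig
    rwa [show (1024:ℝ) = 32^2 by norm_num, Real.sqrt_sq (by norm_num : (0:ℝ) ≤ 32)] at h
  have hr : 1 / Real.sqrt (4 * M N * N * Real.log N) ≤ 1/32 :=
    one_div_le_one_div_of_le (by norm_num) h32
  have hsqrt2 : (1:ℝ) ≤ Real.sqrt 2 := by
    nlinarith [Real.sq_sqrt (show (0:ℝ) ≤ 2 by norm_num), Real.sqrt_nonneg 2]
  have hbc : Real.log 2 / 2 ≤ betac := by
    unfold betac
    have h := Real.log_le_log (by norm_num : (0:ℝ) < 2)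
      (by linarith : (2:ℝ) ≤ 1 + Real.sqrt 2)
    linarith
  have hβ0 : (1:ℝ)/4 ≤ 2 * β := by
    have := hβ.1
    nlinarith [Real.log_two_gt_d9]
  obtain ⟨hg0, hgc⟩ := hγ β (by linarith) θ hθ
  exact key_ineq (2*β) (γ β θ) θ hβ0 hθ.1 hθ.2 hg0 hgc
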